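/- Let p : ℝ² → ℂ and let φ₁, φ₂, ψ₁, ψ₂ : ℝ² → ℂ be differentiable functions satisfying, for i = 1,2 and all (x,y) ∈ ℝ², ∂φᵢ/∂y (x,y) = p(x,y)·ψᵢ(x,y) and ∂ψᵢ/∂x (x,y) = conj(p(x,y))·φᵢ(x,y). Define E₁, E₂ : ℝ² → ℝ⁴ by E₁ = (Re(φ₁·conj(φ₂)), −Im(φ₁·conj(φ₂)), (|φ₁|² − |φ₂|²)/2, (|φ₁|² + |φ₂|²)/2) and E₂ by the same formulas with ψ₁, ψ₂ in place of φ₁, φ₂. Then: (a) for all (x,y), ∂E₁/∂y (x,y) = ∂E₂/∂x (x,y), i.e. the ℝ⁴-valued 1-form E₁ dx + E₂ dy is closed; and (b) Q(E₁(x,y)) = 0 and Q(E₂(x,y)) = 0 for all (x,y), where Q(v) = v₁² + v₂² + v₃² − v₄². -/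

import Mathlib

open Complex

private lemma Wfderiv (f g : ℝ × ℝ → ℂ) (hf : Differentiable ℝ f) (hg : Differentiable ℝ g)
    (z v : ℝ × ℝ) :
    fderiv ℝ (fun q => ((f q * (starRingEnd ℂ) (g q)).re,
      -(f q * (starRingEnd ℂ) (g q)).im,
      ((f q * (starRingEnd ℂ) (f q)).re - (g q * (starRingEnd ℂ) (g q)).re) / 2,
      ((f q * (starRingEnd ℂ) (f q)).re + (g q * (starRingEnd ℂ) (g q)).re) / 2)) z v =
    ((fderiv ℝ f z v * (starRingEnd ℂ) (g z) + f z * (starRingEnd ℂ) (fderiv ℝ g z v)).re,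
     -(fderiv ℝ f z v * (starRingEnd ℂ) (g z) + f z * (starRingEnd ℂ) (fderiv ℝ g z v)).im,
     ((fderiv ℝ f z v * (starRingEnd ℂ) (f z) + f z * (starRingEnd ℂ) (fderiv ℝ f z v)).re
       - (fderiv ℝ g z v * (starRingEnd ℂ) (g z) + g z * (starRingEnd ℂ) (fderiv ℝ g z v)).re) / 2,
     ((fderiv ℝ f z v * (starRingEnd ℂ) (f z) + f z * (starRingEnd ℂ) (fderiv ℝ f z v)).re
       + (fderiv ℝ g z v * (starRingEnd ℂ) (g z) + g z * (starRingEnd ℂ) (fderiv ℝ g z v)).re) / 2) := by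
  have hf' := (hf z).hasFDerivAt
  have hg' := (hg z).hasFDerivAt
  have hcf : HasFDerivAt (fun q => (starRingEnd ℂ) (f q)) _ z := hf'.star
  have hcg : HasFDerivAt (fun q => (starRingEnd ℂ) (g q)) _ z := hg'.star
  have h1 := hf'.mul hcg
  have h2 := hf'.mul hcf
  have h3 := hg'.mul hcg
  have hre1 := Complex.reCLM.hasFDerivAt.comp z h1
  have him1 := (Complex.imCLM.hasFDerivAt.comp z h1).neg
  have hre2 := Complex.reCLM.hasFDerivAt.comp z h2
  have hre3 := Complex.reCLM.hasFDerivAt.comp z h3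
  have H := hre1.prodMk (him1.prodMk (((hre2.sub hre3).const_mul (2⁻¹:ℝ)).prodMk
    ((hre2.add hre3).const_mul (2⁻¹:ℝ))))
  simp only [div_eq_inv_mul]
  have H' : HasFDerivAt (fun q : ℝ × ℝ =>
      ((f q * (starRingEnd ℂ) (g q)).re, -(f q * (starRingEnd ℂ) (g q)).im,
        2⁻¹ * ((f q * (starRingEnd ℂ) (f q)).re - (g q * (starRingEnd ℂ) (g q)).re),
        2⁻¹ * ((f q * (starRingEnd ℂ) (f q)).re + (g q * (starRingEnd ℂ) (g q)).re))) _ z := H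
  rw [H'.fderiv]
  simp [ContinuousLinearMap.prod_apply, Function.comp_def, smul_eq_mul,
    Complex.star_def, mul_comm, Prod.ext_iff]
  refine ⟨by ring, by ring, by ring⟩

private lemma Wform (f g : ℝ × ℝ → ℂ) (E : ℝ × ℝ → ℝ × ℝ × ℝ × ℝ)
    (hE : ∀ x y : ℝ, E (x, y) =
      ((f (x, y) * (starRingEnd ℂ) (g (x, y))).re,
       -(f (x, y) * (starRingEnd ℂ) (g (x, y))).im,
       (‖f (x, y)‖ ^ 2 - ‖g (x, y)‖ ^ 2) / 2,
       (‖f (x, y)‖ ^ 2 + ‖g (x, y)‖ ^ 2) / 2)) :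
    E = fun q => ((f q * (starRingEnd ℂ) (g q)).re,
      -(f q * (starRingEnd ℂ) (g q)).im,
      ((f q * (starRingEnd ℂ) (f q)).re - (g q * (starRingEnd ℂ) (g q)).re) / 2,
      ((f q * (starRingEnd ℂ) (f q)).re + (g q * (starRingEnd ℂ) (g q)).re) / 2) := by
  funext q
  obtain ⟨x, y⟩ := q
  rw [hE x y]
  simp [Complex.mul_conj, ← Complex.sq_norm, ← Complex.ofReal_pow]

private lemma key_iso (a b : ℂ) :
    (a * (starRingEnd ℂ) b).re ^ 2 + (a * (starRingEnd ℂ) b).im ^ 2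
      = ‖a‖ ^ 2 * ‖b‖ ^ 2 := by
  have : (a * (starRingEnd ℂ) b).re ^ 2 + (a * (starRingEnd ℂ) b).im ^ 2
      = Complex.normSq (a * (starRingEnd ℂ) b) := by
    simp [Complex.normSq_apply, sq]
  rw [this, map_mul, Complex.normSq_conj, Complex.sq_norm, Complex.sq_norm]

/-- Closedness and isotropy of the ℝ⁴-valued 1-form E₁ dx + E₂ dy built from a
solution of the Dirac equation, underlying the Weierstrass representation of time-like
surfaces in ℝ^{3,1}. -/
theorem weierstrass_R31_closed_isotropic
    (p : ℝ × ℝ → ℂ) (φ₁ φ₂ ψ₁ ψ₂ : ℝ × ℝ → ℂ)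
    (hφ₁diff : Differentiable ℝ φ₁) (hφ₂diff : Differentiable ℝ φ₂)
    (hψ₁diff : Differentiable ℝ ψ₁) (hψ₂diff : Differentiable ℝ ψ₂)
    (hφ₁ : ∀ x y : ℝ, fderiv ℝ φ₁ (x, y) (0, 1) = p (x, y) * ψ₁ (x, y))
    (hφ₂ : ∀ x y : ℝ, fderiv ℝ φ₂ (x, y) (0, 1) = p (x, y) * ψ₂ (x, y))
    (hψ₁ : ∀ x y : ℝ, fderiv ℝ ψ₁ (x, y) (1, 0) = (starRingEnd ℂ) (p (x, y)) * φ₁ (x, y))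
    (hψ₂ : ∀ x y : ℝ, fderiv ℝ ψ₂ (x, y) (1, 0) = (starRingEnd ℂ) (p (x, y)) * φ₂ (x, y))
    (E₁ E₂ : ℝ × ℝ → ℝ × ℝ × ℝ × ℝ)
    (hE₁ : ∀ x y : ℝ, E₁ (x, y) =
      ((φ₁ (x, y) * (starRingEnd ℂ) (φ₂ (x, y))).re,
       -(φ₁ (x, y) * (starRingEnd ℂ) (φ₂ (x, y))).im,
       (‖φ₁ (x, y)‖ ^ 2 - ‖φ₂ (x, y)‖ ^ 2) / 2,
       (‖φ₁ (x, y)‖ ^ 2 + ‖φ₂ (x, y)‖ ^ 2) / 2))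
    (hE₂ : ∀ x y : ℝ, E₂ (x, y) =
      ((ψ₁ (x, y) * (starRingEnd ℂ) (ψ₂ (x, y))).re,
       -(ψ₁ (x, y) * (starRingEnd ℂ) (ψ₂ (x, y))).im,
       (‖ψ₁ (x, y)‖ ^ 2 - ‖ψ₂ (x, y)‖ ^ 2) / 2,
       (‖ψ₁ (x, y)‖ ^ 2 + ‖ψ₂ (x, y)‖ ^ 2) / 2)) :
    ∀ x y : ℝ,
      fderiv ℝ E₁ (x, y) (0, 1) = fderiv ℝ E₂ (x, y) (1, 0) ∧
      (E₁ (x, y)).1 ^ 2 + (E₁ (x, y)).2.1 ^ 2 + (E₁ (x, y)).2.2.1 ^ 2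
        - (E₁ (x, y)).2.2.2 ^ 2 = 0 ∧
      (E₂ (x, y)).1 ^ 2 + (E₂ (x, y)).2.1 ^ 2 + (E₂ (x, y)).2.2.1 ^ 2
        - (E₂ (x, y)).2.2.2 ^ 2 = 0 := by
  intro x y
  refine ⟨?_, ?_, ?_⟩
  · rw [Wform φ₁ φ₂ E₁ hE₁, Wform ψ₁ ψ₂ E₂ hE₂,
      Wfderiv φ₁ φ₂ hφ₁diff hφ₂diff (x, y) (0, 1),
      Wfderiv ψ₁ ψ₂ hψ₁diff hψ₂diff (x, y) (1, 0),
      hφ₁ x y, hφ₂ x y, hψ₁ x y, hψ₂ x y]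
    simp only [map_mul, Complex.conj_conj, Prod.mk.injEq]
    refine ⟨?_, ?_, ?_, ?_⟩ <;>
      (simp [Complex.add_re, Complex.add_im, Complex.mul_re, Complex.mul_im,
        Complex.conj_re, Complex.conj_im]; try ring)
  · rw [hE₁ x y]
    have := key_iso (φ₁ (x, y)) (φ₂ (x, y))
    simp only
    nlinarith [this]
  · rw [hE₂ x y]
    have := key_iso (ψ₁ (x, y)) (ψ₂ (x, y))
    simp only
    nlinarith [this]
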